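/- Take ℚ̄ to be the field of algebraic numbers inside ℂ, and let L = ℚ^(2) be the compositum of all degree-≤2 extensions of ℚ inside ℚ̄. Then the real elements of L form exactly the field K = ℚ({√p : p prime}): L ∩ ℝ = K. -/

import Mathlib

open scoped IntermediateField


/-- `ℚ^(2)` realised inside `ℂ`: the compositum of all subfields of the algebraic numbers
of degree at most 2 over `ℚ` (any subfield of `ℂ` of degree at most 2 over `ℚ` consists of
algebraic numbers). -/
noncomputable def Qsqrt2C : IntermediateField ℚ ℂ :=
  ⨆ F ∈ {F : IntermediateField ℚ ℂ | Module.rank ℚ F ≤ 2}, F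

/-- `K = ℚ({√p : p prime})` realised inside `ℂ`, generated by the positive real square
roots of the rational primes. -/
noncomputable def KsqrtC : IntermediateField ℚ ℂ :=
  IntermediateField.adjoin ℚ {x : ℂ | ∃ p : ℕ, p.Prime ∧ x = (Real.sqrt p : ℂ)}

noncomputable def RealIF : IntermediateField ℚ ℂ :=
  Subfield.toIntermediateField Complex.ofRealHom.fieldRange
    (fun q => ⟨(q : ℝ), by norm_num⟩)

lemma mem_RealIF {x : ℂ} : x ∈ RealIF ↔ x.im = 0 := by
  constructor
  · rintro ⟨r, rfl⟩; simp
  · intro h; exact ⟨x.re, Complex.ext rfl (by simpa using h.symm)⟩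

lemma K_real {x : ℂ} (hx : x ∈ KsqrtC) : x.im = 0 := by
  have : KsqrtC ≤ RealIF := by
    rw [KsqrtC, IntermediateField.adjoin_le_iff]
    rintro y ⟨p, hp, rfl⟩
    exact mem_RealIF.mpr (by simp)
  exact mem_RealIF.mp (this hx)

lemma sqrt_nat_mem (n : ℕ) : (Real.sqrt n : ℂ) ∈ KsqrtC := by
  induction n using Nat.strong_induction_on with
  | _ n ih =>
    rcases Nat.eq_zero_or_pos n with h | h
    · subst h; simp
    rcases eq_or_ne n 1 with h1 | h1
    · subst h1; simp
    obtain ⟨p, hp, m, rfl⟩ := Nat.exists_prime_and_dvd h1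
    have hm0 : 0 < m := Nat.pos_of_ne_zero (by rintro rfl; simp at h)
    have hmlt : m < p * m := by
      have := hp.two_le; nlinarith
    have h1' : Real.sqrt ((p : ℝ) * (m : ℝ)) = Real.sqrt p * Real.sqrt m :=
      Real.sqrt_mul (by positivity) _
    rw [show (((p * m : ℕ) : ℝ)) = ((p:ℕ):ℝ) * ((m:ℕ):ℝ) by push_cast; ring, h1']
    push_cast
    exact mul_mem (IntermediateField.subset_adjoin _ _ ⟨p, hp, rfl⟩) (ih m hmlt)

lemma sqrt_rat_mem {q : ℚ} (hq : 0 ≤ q) : (Real.sqrt q : ℂ) ∈ KsqrtC := by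
  have hden : (0:ℝ) < (q.den : ℝ) := by exact_mod_cast q.pos
  have key : ((q.num.toNat * q.den : ℕ) : ℝ) = (q:ℝ) * (q.den:ℝ)^2 := by
    have hn : ((q.num.toNat : ℕ) : ℝ) = ((q.num : ℤ) : ℝ) := by
      exact_mod_cast congrArg (fun z : ℤ => (z : ℝ)) (Int.toNat_of_nonneg (Rat.num_nonneg.mpr hq))
    push_cast
    rw [hn, Rat.cast_def]
    field_simp
  have h2 : Real.sqrt q = Real.sqrt ((q.num.toNat * q.den : ℕ)) / (q.den : ℝ) := by
    rw [key, Real.sqrt_mul (by exact_mod_cast hq), Real.sqrt_sq hden.le]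
    field_simp
  have h3 : (Real.sqrt q : ℂ) = (Real.sqrt ((q.num.toNat * q.den : ℕ)) : ℂ) / ((q.den:ℚ) : ℂ) := by
    rw [h2]; push_cast; ring
  rw [h3]
  exact div_mem (sqrt_nat_mem _) (IntermediateField.algebraMap_mem KsqrtC ((q.den : ℚ)))

/-- The field `K(i) = {a + b i : a b ∈ K}`. -/
noncomputable def WIF : IntermediateField ℚ ℂ := by
  refine Subfield.toIntermediateField
    { carrier := {x : ℂ | ∃ a ∈ KsqrtC, ∃ b ∈ KsqrtC, x = a + b * Complex.I}
      one_mem' := ⟨1, one_mem _, 0, zero_mem _, by ring⟩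
      zero_mem' := ⟨0, zero_mem _, 0, zero_mem _, by ring⟩
      mul_mem' := ?_
      add_mem' := ?_
      neg_mem' := ?_
      inv_mem' := ?_ }
    (fun q => ⟨q, IntermediateField.algebraMap_mem _ q, 0, zero_mem _, by rw [eq_ratCast (algebraMap ℚ ℂ) q]; ring⟩)
  · rintro x y ⟨a, ha, b, hb, rfl⟩ ⟨c, hc, d, hd, rfl⟩
    refine ⟨a*c - b*d, sub_mem (mul_mem ha hc) (mul_mem hb hd),
      a*d + b*c, add_mem (mul_mem ha hd) (mul_mem hb hc), ?_⟩
    linear_combination b * d * Complex.I_sq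
  · rintro x y ⟨a, ha, b, hb, rfl⟩ ⟨c, hc, d, hd, rfl⟩
    exact ⟨a + c, add_mem ha hc, b + d, add_mem hb hd, by ring⟩
  · rintro x ⟨a, ha, b, hb, rfl⟩
    exact ⟨-a, neg_mem ha, -b, neg_mem hb, by ring⟩
  · rintro x ⟨a, ha, b, hb, rfl⟩
    by_cases hx : a + b * Complex.I = 0
    · exact ⟨0, zero_mem _, 0, zero_mem _, by rw [hx]; simp⟩
    · have hab : a^2 + b^2 ≠ 0 := by
        intro h0
        apply hx
        have ha' : a = (a.re : ℂ) := by
          apply Complex.ext <;> simp [K_real ha]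
        have hb' : b = (b.re : ℂ) := by
          apply Complex.ext <;> simp [K_real hb]
        rw [ha', hb'] at h0 ⊢
        have : (a.re^2 + b.re^2 : ℝ) = 0 := by exact_mod_cast h0
        have h1 : a.re = 0 := by nlinarith [sq_nonneg a.re, sq_nonneg b.re]
        have h2 : b.re = 0 := by nlinarith [sq_nonneg a.re, sq_nonneg b.re]
        simp [h1, h2]
      refine ⟨a / (a^2+b^2), div_mem ha (add_mem (pow_mem ha 2) (pow_mem hb 2)),
        -b / (a^2+b^2), div_mem (neg_mem hb) (add_mem (pow_mem ha 2) (pow_mem hb 2)), ?_⟩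
      apply inv_eq_of_mul_eq_one_left
      field_simp
      linear_combination (-b^2) * Complex.I_sq

lemma mem_WIF {x : ℂ} : x ∈ WIF ↔ ∃ a ∈ KsqrtC, ∃ b ∈ KsqrtC, x = a + b * Complex.I :=
  Iff.rfl

lemma sq_rat_mem_WIF {s : ℂ} {q : ℚ} (h : s^2 = (q : ℂ)) : s ∈ WIF := by
  rcases le_or_gt 0 q with hq | hq
  · have hc : ((Real.sqrt q : ℂ))^2 = (q : ℂ) := by
      rw [← Complex.ofReal_pow, Real.sq_sqrt (by exact_mod_cast hq)]
      push_cast; rfl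
    have := (Commute.all s _).sq_eq_sq_iff_eq_or_eq_neg.mp (h.trans hc.symm)
    rcases this with rfl | rfl
    · exact mem_WIF.mpr ⟨_, sqrt_rat_mem hq, 0, zero_mem _, by ring⟩
    · exact mem_WIF.mpr ⟨_, neg_mem (sqrt_rat_mem hq), 0, zero_mem _, by ring⟩
  · have hq' : (0:ℚ) ≤ -q := by linarith
    have hc : ((Real.sqrt (-q) : ℂ) * Complex.I)^2 = (q : ℂ) := by
      rw [mul_pow, Complex.I_sq, ← Complex.ofReal_pow, Real.sq_sqrt (by exact_mod_cast hq')]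
      push_cast; ring
    have := (Commute.all s _).sq_eq_sq_iff_eq_or_eq_neg.mp (h.trans hc.symm)
    rcases this with rfl | rfl
    · exact mem_WIF.mpr ⟨0, zero_mem _, _, sqrt_rat_mem hq', by push_cast; ring⟩
    · exact mem_WIF.mpr ⟨0, zero_mem _, _, neg_mem (sqrt_rat_mem hq'), by push_cast; ring⟩

lemma Qsqrt2C_le_WIF : Qsqrt2C ≤ WIF := by
  rw [Qsqrt2C]
  refine iSup_le fun F => iSup_le fun hF => ?_
  intro x hx
  haveI : FiniteDimensional ℚ F :=
    Module.rank_lt_aleph0_iff.mp (lt_of_le_of_lt hF (by simpa using Cardinal.nat_lt_aleph0 2))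
  have hfr : Module.finrank ℚ F ≤ 2 := by
    have := Module.finrank_le_of_rank_le (n := 2) (by exact_mod_cast hF)
    exact this
  set y : F := ⟨x, hx⟩ with hy
  have hxy : algebraMap F ℂ y = x := rfl
  have hmp : minpoly ℚ x = minpoly ℚ y := by
    rw [← hxy, minpoly.algebraMap_eq (algebraMap F ℂ).injective]
  have hint : IsIntegral ℚ x := by
    rw [← hxy]
    exact (IsIntegral.of_finite ℚ y).algebraMap
  have hdeg : (minpoly ℚ x).natDegree ≤ 2 := by
    rw [hmp]
    exact le_trans (minpoly.natDegree_le y) hfr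
  have hdeg1 : 1 ≤ (minpoly ℚ x).natDegree := (minpoly.natDegree_pos hint)
  have haev : Polynomial.aeval x (minpoly ℚ x) = 0 := minpoly.aeval ℚ x
  have hmon := minpoly.monic hint
  interval_cases hd : (minpoly ℚ x).natDegree
  · -- degree 1 : x rational
    have hx1 : x = algebraMap ℚ ℂ (-(minpoly ℚ x).coeff 0) := by
      have hp := Polynomial.eq_X_add_C_of_natDegree_le_one (by omega : (minpoly ℚ x).natDegree ≤ 1)
      have hc1 : (minpoly ℚ x).coeff 1 = 1 := by
        rw [← hd]; exact hmon.coeff_natDegree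
      rw [hc1] at hp
      · rw [hp] at haev
        simp at haev
        rw [eq_ratCast (algebraMap ℚ ℂ)]
        push_cast
        linear_combination haev
    rw [hx1]
    exact IntermediateField.algebraMap_mem WIF _
  · -- degree 2
    have hc2 : (minpoly ℚ x).coeff 2 = 1 := by rw [← hd]; exact hmon.coeff_natDegree
    have hsum := Polynomial.aeval_eq_sum_range (R := ℚ) (p := minpoly ℚ x) x
    rw [hd, haev] at hsum
    set b := (minpoly ℚ x).coeff 1 with hb
    set c := (minpoly ℚ x).coeff 0 with hc
    have hquad : x^2 + (b:ℂ) * x + (c:ℂ) = 0 := by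
      rw [Finset.sum_range_succ, Finset.sum_range_succ, Finset.sum_range_one, hc2] at hsum
      rw [Rat.smul_def, Rat.smul_def, Rat.smul_def] at hsum
      push_cast at hsum ⊢
      linear_combination -hsum
    have hs : (x + ((b/2 : ℚ) : ℂ))^2 = (((b/2)^2 - c : ℚ) : ℂ) := by
      push_cast
      linear_combination hquad
    have hsW := sq_rat_mem_WIF hs
    have hxeq : x = (x + ((b/2 : ℚ):ℂ)) + (((-(b/2)) : ℚ) : ℂ) := by push_cast; ring
    rw [hxeq]
    refine add_mem hsW ?_
    rw [← eq_ratCast (algebraMap ℚ ℂ)]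
    exact IntermediateField.algebraMap_mem WIF _

lemma K_le_Qsqrt2C : KsqrtC ≤ Qsqrt2C := by
  rw [KsqrtC, IntermediateField.adjoin_le_iff]
  rintro α ⟨p, hp, rfl⟩
  set α : ℂ := (Real.sqrt p : ℂ)
  have hα2 : α ^ 2 = ((p : ℚ) : ℂ) := by
    show ((Real.sqrt p : ℂ))^2 = _
    rw [← Complex.ofReal_pow, Real.sq_sqrt (by positivity)]
    push_cast; rfl
  have hPmon : (Polynomial.X ^ 2 - Polynomial.C ((p : ℚ)) : Polynomial ℚ).Monic :=
    Polynomial.monic_X_pow_sub_C _ (by norm_num)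
  have haev : Polynomial.aeval α (Polynomial.X ^ 2 - Polynomial.C ((p : ℚ))) = 0 := by
    simp [hα2]
  have hint : IsIntegral ℚ α := ⟨_, hPmon, haev⟩
  haveI : FiniteDimensional ℚ ℚ⟮α⟯ := IntermediateField.adjoin.finiteDimensional hint
  have hfr : Module.finrank ℚ ℚ⟮α⟯ ≤ 2 := by
    rw [IntermediateField.adjoin.finrank hint]
    have := minpoly.degree_le_of_ne_zero ℚ α hPmon.ne_zero haev
    have h2 : (Polynomial.X ^ 2 - Polynomial.C ((p : ℚ)) : Polynomial ℚ).natDegree = 2 := by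
      compute_degree!
    calc (minpoly ℚ α).natDegree ≤ (Polynomial.X ^ 2 - Polynomial.C ((p : ℚ))).natDegree :=
          Polynomial.natDegree_le_natDegree this
      _ = 2 := h2
  have hrank : Module.rank ℚ ℚ⟮α⟯ ≤ 2 := by
    rw [← Module.finrank_eq_rank]
    exact_mod_cast hfr
  have hsub : ℚ⟮α⟯ ≤ Qsqrt2C := by
    rw [Qsqrt2C]
    exact le_iSup₂ (f := fun (F : IntermediateField ℚ ℂ) (_ : F ∈ _) => F) ℚ⟮α⟯ hrank
  exact hsub (IntermediateField.mem_adjoin_simple_self ℚ α)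

/-- The real elements of `L = ℚ^(2)` form exactly the field `K = ℚ({√p : p prime})`:
`L ∩ ℝ = K`. -/
theorem real_part_of_Qsqrt2 :
    ∀ x : ℂ, (x ∈ Qsqrt2C ∧ x.im = 0) ↔ x ∈ KsqrtC := by
  intro x
  constructor
  · rintro ⟨hQ, him⟩
    obtain ⟨a, ha, b, hb, rfl⟩ := mem_WIF.mp (Qsqrt2C_le_WIF hQ)
    have haim : a.im = 0 := K_real ha
    have hbim : b.im = 0 := K_real hb
    have hbre : b.re = 0 := by
      simpa [Complex.add_im, Complex.mul_im, haim, hbim] using him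
    have hb0 : b = 0 := Complex.ext hbre hbim
    simpa [hb0] using ha
  · intro hK
    exact ⟨K_le_Qsqrt2C hK, K_real hK⟩
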